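/- For the model Y = XZ with X ~ Bernoulli(p) and Z ~ Bernoulli(p') independent (0 < p, p' < 1), Chatterjee's measure evaluates to ξ(X, Y) = (1-p)p' / (1 - pp'). -/

import Mathlib

open MeasureTheory ProbabilityTheory

private lemma variance_congr_aux {Ω : Type*} {m : MeasurableSpace Ω} {μ : Measure Ω}
    {f g : Ω → ℝ} (h : f =ᵐ[μ] g) : variance f μ = variance g μ := by
  unfold ProbabilityTheory.variance ProbabilityTheory.evariance
  rw [integral_congr_ae h]
  congr 1
  refine lintegral_congr_ae (h.mono fun ω hω => ?_)
  simp only [hω]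

/-- For `Y = X·Z` with `X ~ Bernoulli(p)` and `Z ~ Bernoulli(p')` independent
(`0 < p, p' < 1`), Chatterjee's measure
`ξ(X,Y) = Σ_t P(Y=t)·Var(P(Y ≥ t | X)) / Σ_t P(Y=t)·P(Y ≥ t)(1 - P(Y ≥ t))`
(with `t` ranging over the two values `{0,1}` of `Y`) evaluates to
`(1-p)p'/(1-pp')`. -/
theorem xi_bernoulli_product
    {Ω : Type*} [MeasurableSpace Ω] (μ : Measure Ω) [IsProbabilityMeasure μ]
    (X Z : Ω → ℝ) (hX : Measurable X) (hZ : Measurable Z)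
    (hindep : IndepFun X Z μ)
    (hXval : ∀ ω, X ω = 0 ∨ X ω = 1) (hZval : ∀ ω, Z ω = 0 ∨ Z ω = 1)
    (p p' : ℝ) (hp : 0 < p) (hp1 : p < 1) (hp' : 0 < p') (hp'1 : p' < 1)
    (hXp : μ {ω | X ω = 1} = ENNReal.ofReal p)
    (hZp : μ {ω | Z ω = 1} = ENNReal.ofReal p')
    (Y : Ω → ℝ) (hY : Y = fun ω => X ω * Z ω) :
    (∑ t ∈ ({0, 1} : Finset ℝ),
        (μ {ω | Y ω = t}).toReal *
          variance (fun ω => ((condDistrib Y X μ) (X ω) (Set.Ici t)).toReal) μ) /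
      (∑ t ∈ ({0, 1} : Finset ℝ),
        (μ {ω | Y ω = t}).toReal *
          ((μ {ω | t ≤ Y ω}).toReal * (1 - (μ {ω | t ≤ Y ω}).toReal))) =
    (1 - p) * p' / (1 - p * p') := by
  have hYmeas : Measurable Y := hY ▸ hX.mul hZ
  set A : Set Ω := X ⁻¹' {1} with hA
  set B : Set Ω := Z ⁻¹' {1} with hB
  have hAmeas : MeasurableSet A := hX (measurableSet_singleton 1)
  have hAeq : A = {ω | X ω = 1} := rfl
  have hBeq : B = {ω | Z ω = 1} := rfl
  have hY01 : ∀ ω, Y ω = 0 ∨ Y ω = 1 := by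
    intro ω
    rcases hXval ω with h1 | h1 <;> rcases hZval ω with h2 | h2 <;>
      simp [hY, h1, h2]
  have hY1 : {ω | Y ω = 1} = A ∩ B := by
    ext ω
    simp only [Set.mem_setOf_eq, Set.mem_inter_iff, hA, hB, Set.mem_preimage,
      Set.mem_singleton_iff]
    rcases hXval ω with h1 | h1 <;> rcases hZval ω with h2 | h2 <;>
      simp [hY, h1, h2]
  have hpp' : (0:ℝ) < p * p' := mul_pos hp hp'
  have hpp'1 : p * p' < 1 := by nlinarith
  have hμY1 : μ {ω | Y ω = 1} = ENNReal.ofReal (p * p') := by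
    rw [hY1, hindep.measure_inter_preimage_eq_mul _ _ (measurableSet_singleton 1)
      (measurableSet_singleton 1)]
    rw [← hAeq] at hXp
    rw [← hBeq] at hZp
    rw [hXp, hZp, ← ENNReal.ofReal_mul hp.le]
  have hge1 : {ω | (1:ℝ) ≤ Y ω} = {ω | Y ω = 1} := by
    ext ω
    rcases hY01 ω with h | h <;> simp [h]
  have hge0 : {ω | (0:ℝ) ≤ Y ω} = Set.univ := by
    ext ω
    rcases hY01 ω with h | h <;> simp [h]
  have hYpre1 : Y ⁻¹' Set.Ici (1:ℝ) = A ∩ B := by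
    rw [← hY1]; ext ω
    rcases hY01 ω with h | h <;> simp [h]
  have hYpre0 : Y ⁻¹' Set.Ici (0:ℝ) = Set.univ := by
    ext ω
    rcases hY01 ω with h | h <;> simp [h]
  -- Variance of the t = 0 term is zero
  have hvar0 : variance (fun ω => ((condDistrib Y X μ) (X ω) (Set.Ici (0:ℝ))).toReal) μ = 0 := by
    have h1 : (fun a => ((condDistrib Y X μ) (X a) (Set.Ici (0:ℝ))).toReal) =ᵐ[μ] _ :=
      condDistrib_ae_eq_condExp (μ := μ) hX hYmeas (measurableSet_Ici (a := (0:ℝ)))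
    rw [hYpre0, Set.indicator_univ] at h1
    rw [condExp_const hX.comap_le] at h1
    rw [variance_congr_aux h1, variance_eq_sub (memLp_const 1)]
    simp
  -- The conditional probability for t = 1
  set g : Ω → ℝ := fun ω => p' * A.indicator (fun _ => (1:ℝ)) ω with hg
  have hgae : g =ᵐ[μ] fun ω => ((condDistrib Y X μ) (X ω) (Set.Ici (1:ℝ))).toReal := by
    have h1 : (fun a => ((condDistrib Y X μ) (X a) (Set.Ici (1:ℝ))).toReal) =ᵐ[μ] _ :=
      condDistrib_ae_eq_condExp (μ := μ) hX hYmeas (measurableSet_Ici (a := (1:ℝ)))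
    refine (ae_eq_condExp_of_forall_setIntegral_eq hX.comap_le ?_ ?_ ?_ ?_).trans h1.symm
    · exact (integrable_const _).indicator (hYmeas measurableSet_Ici)
    · intro s _ _
      exact ((((integrable_const (1:ℝ)).indicator hAmeas).const_mul p')).integrableOn
    · rintro s ⟨u, hu, rfl⟩ -
      have hl : ∫ x in X ⁻¹' u, g x ∂μ = p' * (μ (X ⁻¹' u ∩ A)).toReal := by
        rw [hg]
        simp only
        rw [integral_const_mul, setIntegral_indicator hAmeas, setIntegral_const, smul_eq_mul,
          mul_one, measureReal_def]
      have hr : ∫ x in X ⁻¹' u, (Y ⁻¹' Set.Ici (1:ℝ)).indicator (fun _ => (1:ℝ)) x ∂μ =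
          (μ (X ⁻¹' u ∩ (A ∩ B))).toReal := by
        rw [setIntegral_indicator (hYmeas measurableSet_Ici), hYpre1, setIntegral_const,
          smul_eq_mul, mul_one, measureReal_def]
      rw [hl, hr]
      have e1 : X ⁻¹' u ∩ A = X ⁻¹' (u ∩ {1}) := by rw [Set.preimage_inter]
      have e2 : X ⁻¹' u ∩ (A ∩ B) = X ⁻¹' (u ∩ {1}) ∩ B := by
        rw [Set.preimage_inter, Set.inter_assoc]
      rw [e1, e2, hindep.measure_inter_preimage_eq_mul _ _ (hu.inter (measurableSet_singleton 1))
        (measurableSet_singleton 1)]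
      rw [← hBeq] at hZp
      rw [hZp, ENNReal.toReal_mul, ENNReal.toReal_ofReal hp'.le, mul_comm]
    · have hA' : MeasurableSet[MeasurableSpace.comap X inferInstance] A :=
        ⟨{1}, measurableSet_singleton 1, rfl⟩
      have : Measurable[MeasurableSpace.comap X inferInstance] g := by
        exact (measurable_const.indicator hA').const_mul p'
      exact this.stronglyMeasurable.aestronglyMeasurable
  -- Variance of the t = 1 term
  have hvar1 : variance (fun ω => ((condDistrib Y X μ) (X ω) (Set.Ici (1:ℝ))).toReal) μ =
      p' ^ 2 * p * (1 - p) := by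
    rw [← variance_congr_aux hgae]
    have hmem : MemLp g 2 μ :=
      (memLp_indicator_const 2 hAmeas 1 (Or.inr (measure_ne_top μ A))).const_mul p'
    rw [variance_eq_sub hmem]
    have hμA : (μ A).toReal = p := by
      rw [← hAeq] at hXp
      rw [hXp, ENNReal.toReal_ofReal hp.le]
    have hint1 : ∫ ω, g ω ∂μ = p' * p := by
      rw [hg]
      simp only
      rw [integral_const_mul, integral_indicator hAmeas, setIntegral_const, smul_eq_mul, mul_one,
        measureReal_def, hμA]
    have hsq : (g ^ 2) = fun ω => p' ^ 2 * A.indicator (fun _ => (1:ℝ)) ω := by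
      funext ω
      by_cases h : ω ∈ A <;>
        simp [hg, Set.indicator_of_mem, Set.indicator_of_notMem, h]
    have hint2 : ∫ ω, (g ^ 2) ω ∂μ = p' ^ 2 * p := by
      rw [hsq, integral_const_mul, integral_indicator hAmeas, setIntegral_const, smul_eq_mul,
        mul_one, measureReal_def, hμA]
    rw [hint2, hint1]
    ring
  -- Put everything together
  have hsum : ({0, 1} : Finset ℝ) = {0, 1} := rfl
  rw [Finset.sum_pair (zero_ne_one), Finset.sum_pair (zero_ne_one)]
  rw [hvar0, hvar1, hge0, hge1, hμY1]
  have h10 : μ {ω | Y ω = (0:ℝ)} ≠ ⊤ := measure_ne_top μ _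
  rw [ENNReal.toReal_ofReal hpp'.le]
  simp only [Set.setOf_true, measure_univ, ENNReal.toReal_one]
  have hne : 1 - p * p' ≠ 0 := by nlinarith
  field_simp
  ring
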